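/- Suppose that the real part of ∫_Ω μ(x) ∑_{k=1}^d ∂_k v(x) · conj(∂_k(χ²v)(x)) dx − ω² ∫_Ω ν(x) χ(x)² |v(x)|² dx equals zero (this is the real part of the identity b_{Ω_j}(v, χ²v) = 0, the boundary terms being purely imaginary). Then ∫_Ω μ(x) ∑_{k=1}^d |∂_k(χv)(x)|² dx + ω² ∫_Ω ν(x) χ(x)² |v(x)|² dx = ∫_Ω μ(x) |v(x)|² ‖∇χ(x)‖² dx + 2ω² ∫_Ω ν(x) χ(x)² |v(x)|² dx. (This is the Caccioppoli-type identity established in the proof of Proposition 1.) -/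

import Mathlib

open MeasureTheory

open Finset in
private lemma re_term' (a b : ℂ) (c e : ℝ) :
    (a * (starRingEnd ℂ) ((c:ℂ)^2 * a + 2 * (c:ℂ) * (e:ℂ) * b)).re
      = c^2 * ‖a‖^2 + 2*c*e*(a * (starRingEnd ℂ) b).re := by
  simp [Complex.mul_re, Complex.mul_im, Complex.add_re, Complex.add_im,
    Complex.sq_norm, Complex.normSq_apply, ← Complex.ofReal_pow]
  ring

private lemma norm_term' (a b : ℂ) (c e : ℝ) :
    ‖(c:ℂ)*a + (e:ℂ)*b‖^2
      = c^2*‖a‖^2 + 2*c*e*(a * (starRingEnd ℂ) b).re + e^2*‖b‖^2 := by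
  simp [Complex.sq_norm, Complex.normSq_apply, Complex.mul_re,
    Complex.mul_im, Complex.add_re, Complex.add_im, ← Complex.ofReal_pow]
  ring

private lemma cs_sqrt {ι : Type*} (s : Finset ι) (f g : ι → ℝ)
    (hf : ∀ i, 0 ≤ f i) (hg : ∀ i, 0 ≤ g i) :
    ∑ i ∈ s, f i * g i ≤ Real.sqrt (∑ i ∈ s, f i ^ 2) * Real.sqrt (∑ i ∈ s, g i ^ 2) := by
  have h0 : 0 ≤ ∑ i ∈ s, f i * g i :=
    Finset.sum_nonneg fun i _ => mul_nonneg (hf i) (hg i)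
  calc ∑ i ∈ s, f i * g i = Real.sqrt ((∑ i ∈ s, f i * g i) ^ 2) := (Real.sqrt_sq h0).symm
    _ ≤ Real.sqrt ((∑ i ∈ s, f i ^ 2) * ∑ i ∈ s, g i ^ 2) :=
        Real.sqrt_le_sqrt (s.sum_mul_sq_le_sq_mul_sq f g)
    _ = _ := Real.sqrt_mul (Finset.sum_nonneg fun i _ => sq_nonneg _) _

/-- Caccioppoli-type identity from the proof of Proposition 1.
Here `dv k` and `dχ k` denote the partial derivatives `∂ₖ v` and `∂ₖ χ`, and
by the product rule `∂ₖ(χ²v) = χ² ∂ₖ v + 2χ (∂ₖ χ) v` and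
`∂ₖ(χv) = χ ∂ₖ v + (∂ₖ χ) v`. -/
theorem caccioppoli_identity
    {d : ℕ} (hd : 1 ≤ d) (Ω : Set (Fin d → ℝ)) (hΩ : IsOpen Ω)
    (μ ν : (Fin d → ℝ) → ℝ) (hμ : Measurable μ) (hν : Measurable ν)
    (ω : ℝ) (hω : 0 < ω)
    (v : (Fin d → ℝ) → ℂ) (dv : Fin d → (Fin d → ℝ) → ℂ)
    (χ : (Fin d → ℝ) → ℝ) (dχ : Fin d → (Fin d → ℝ) → ℝ)
    (hv : ∀ k, ∀ x ∈ Ω, HasLineDerivAt ℝ v (dv k x) x (Pi.single k 1))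
    (hχ : ∀ k, ∀ x ∈ Ω, HasLineDerivAt ℝ χ (dχ k x) x (Pi.single k 1))
    (hvm : Measurable v) (hdvm : ∀ k, Measurable (dv k))
    (hχm : Measurable χ) (hdχm : ∀ k, Measurable (dχ k))
    -- integrability of μ χ² ‖∇v‖²
    (hI1 : IntegrableOn (fun x => μ x * χ x ^ 2 * ∑ k, ‖dv k x‖ ^ 2) Ω)
    -- integrability of μ |v|² ‖∇χ‖²
    (hI2 : IntegrableOn (fun x => μ x * ‖v x‖ ^ 2 * ∑ k, dχ k x ^ 2) Ω)
    -- integrability of μ χ |v| ‖∇χ‖ ‖∇v‖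
    (hI3 : IntegrableOn (fun x => μ x * χ x * ‖v x‖ *
        Real.sqrt (∑ k, dχ k x ^ 2) * Real.sqrt (∑ k, ‖dv k x‖ ^ 2)) Ω)
    -- integrability of ν χ² |v|²
    (hI4 : IntegrableOn (fun x => ν x * χ x ^ 2 * ‖v x‖ ^ 2) Ω)
    -- real part of the identity b(v, χ²v) = 0
    (hb : (∫ x in Ω, (μ x : ℂ) *
            ∑ k, dv k x *
              (starRingEnd ℂ) ((χ x : ℂ) ^ 2 * dv k x +
                2 * (χ x : ℂ) * (dχ k x : ℂ) * v x)).re -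
          ω ^ 2 * ∫ x in Ω, ν x * χ x ^ 2 * ‖v x‖ ^ 2 = 0) :
    (∫ x in Ω, μ x * ∑ k, ‖(χ x : ℂ) * dv k x + (dχ k x : ℂ) * v x‖ ^ 2) +
      ω ^ 2 * ∫ x in Ω, ν x * χ x ^ 2 * ‖v x‖ ^ 2 =
    (∫ x in Ω, μ x * ‖v x‖ ^ 2 * ∑ k, dχ k x ^ 2) +
      2 * ω ^ 2 * ∫ x in Ω, ν x * χ x ^ 2 * ‖v x‖ ^ 2 := by

  set W : (Fin d → ℝ) → ℂ := fun x => (μ x : ℂ) *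
      ∑ k, dv k x * (starRingEnd ℂ) ((χ x : ℂ) ^ 2 * dv k x +
        2 * (χ x : ℂ) * (dχ k x : ℂ) * v x) with hWdef
  -- measurability of W
  have hWm : Measurable W := by
    apply (Complex.measurable_ofReal.comp hμ).mul
    apply Finset.measurable_sum
    intro k _
    exact (hdvm k).mul (Complex.continuous_conj.measurable.comp
      ((((Complex.measurable_ofReal.comp hχm).pow_const 2).mul (hdvm k)).add
        ((((measurable_const.mul (Complex.measurable_ofReal.comp hχm)).mul
          (Complex.measurable_ofReal.comp (hdχm k))).mul hvm))))
  -- integrability of W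
  have hWint : IntegrableOn W Ω := by
    have hg : IntegrableOn (fun x => |μ x * χ x ^ 2 * ∑ k, ‖dv k x‖ ^ 2| +
        2 * |μ x * χ x * ‖v x‖ * Real.sqrt (∑ k, dχ k x ^ 2)
          * Real.sqrt (∑ k, ‖dv k x‖ ^ 2)|) Ω :=
      hI1.abs.add (hI3.abs.const_mul 2)
    refine MeasureTheory.Integrable.mono hg hWm.aestronglyMeasurable (Filter.Eventually.of_forall fun x => ?_)
    have hb1 : ‖W x‖ ≤ |μ x| * χ x ^ 2 * ∑ k, ‖dv k x‖ ^ 2 +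
        2 * (|μ x| * |χ x| * ‖v x‖ * Real.sqrt (∑ k, dχ k x ^ 2)
          * Real.sqrt (∑ k, ‖dv k x‖ ^ 2)) := by
      calc ‖W x‖ = |μ x| * ‖∑ k, dv k x * (starRingEnd ℂ) ((χ x : ℂ) ^ 2 * dv k x +
            2 * (χ x : ℂ) * (dχ k x : ℂ) * v x)‖ := by
            rw [hWdef]; simp [norm_mul]
        _ ≤ |μ x| * ∑ k, ‖dv k x‖ * (χ x ^ 2 * ‖dv k x‖ + 2 * |χ x| * (|dχ k x| * ‖v x‖)) := by
            refine mul_le_mul_of_nonneg_left ?_ (abs_nonneg _)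
            refine (norm_sum_le _ _).trans (Finset.sum_le_sum fun k _ => ?_)
            rw [norm_mul, RingHomIsometric.norm_map]
            refine mul_le_mul_of_nonneg_left ?_ (norm_nonneg _)
            refine (norm_add_le _ _).trans ?_
            have h1 : ‖(χ x:ℂ)^2 * dv k x‖ = χ x ^ 2 * ‖dv k x‖ := by
              rw [norm_mul, ← Complex.ofReal_pow, Complex.norm_real,
                Real.norm_eq_abs, abs_of_nonneg (sq_nonneg _)]
            have h2 : ‖2 * (χ x:ℂ) * (dχ k x:ℂ) * v x‖ = 2 * |χ x| * (|dχ k x| * ‖v x‖) := by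
              simp [norm_mul, Complex.norm_real, Real.norm_eq_abs]; ring
            rw [h1, h2]
        _ = |μ x| * χ x ^ 2 * ∑ k, ‖dv k x‖ ^ 2 +
            2 * |μ x| * |χ x| * ‖v x‖ * ∑ k, |dχ k x| * ‖dv k x‖ := by
            have : ∀ k : Fin d, ‖dv k x‖ * (χ x ^ 2 * ‖dv k x‖ + 2 * |χ x| * (|dχ k x| * ‖v x‖))
                = χ x ^ 2 * ‖dv k x‖ ^ 2 + (2 * |χ x| * ‖v x‖) * (|dχ k x| * ‖dv k x‖) := by
              intro k; ring
            simp_rw [this, Finset.sum_add_distrib, ← Finset.mul_sum, mul_add]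
            ring
        _ ≤ _ := by
            have hcs : ∑ k, |dχ k x| * ‖dv k x‖ ≤
                Real.sqrt (∑ k, dχ k x ^ 2) * Real.sqrt (∑ k, ‖dv k x‖ ^ 2) := by
              have := cs_sqrt Finset.univ (fun k => |dχ k x|) (fun k => ‖dv k x‖)
                (fun k => abs_nonneg _) (fun k => norm_nonneg _)
              simpa [sq_abs] using this
            have hco : 0 ≤ 2 * |μ x| * |χ x| * ‖v x‖ := by positivity
            nlinarith [mul_le_mul_of_nonneg_left hcs hco]
    refine hb1.trans ?_
    rw [Real.norm_eq_abs]
    have e1 : |μ x| * χ x ^ 2 * ∑ k, ‖dv k x‖ ^ 2 ≤ |μ x * χ x ^ 2 * ∑ k, ‖dv k x‖ ^ 2| := by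
      rw [abs_mul, abs_mul]
      gcongr
      · exact le_abs_self _
      · exact le_abs_self _
    have e2 : |μ x| * |χ x| * ‖v x‖ * Real.sqrt (∑ k, dχ k x ^ 2)
          * Real.sqrt (∑ k, ‖dv k x‖ ^ 2)
        ≤ |μ x * χ x * ‖v x‖ * Real.sqrt (∑ k, dχ k x ^ 2)
          * Real.sqrt (∑ k, ‖dv k x‖ ^ 2)| := by
      rw [abs_mul, abs_mul, abs_mul, abs_mul]
      gcongr <;> exact le_abs_self _
    calc _ ≤ |μ x * χ x ^ 2 * ∑ k, ‖dv k x‖ ^ 2| +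
        2 * |μ x * χ x * ‖v x‖ * Real.sqrt (∑ k, dχ k x ^ 2)
          * Real.sqrt (∑ k, ‖dv k x‖ ^ 2)| := by linarith
      _ ≤ _ := le_abs_self _
  -- split the main integral
  have hpt : ∀ x, μ x * ∑ k, ‖(χ x : ℂ) * dv k x + (dχ k x : ℂ) * v x‖ ^ 2
      = (W x).re + μ x * ‖v x‖ ^ 2 * ∑ k, dχ k x ^ 2 := by
    intro x
    have h1 : ∀ k : Fin d, ‖(χ x : ℂ) * dv k x + (dχ k x : ℂ) * v x‖ ^ 2
        = (dv k x * (starRingEnd ℂ) ((χ x:ℂ)^2 * dv k x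
            + 2*(χ x:ℂ)*(dχ k x:ℂ)*v x)).re + ‖v x‖^2 * dχ k x ^ 2 :=
      fun k => by rw [norm_term', re_term']; ring
    simp only [h1]
    rw [Finset.sum_add_distrib, ← Finset.mul_sum, mul_add, hWdef]
    simp only [Complex.re_ofReal_mul, Complex.re_sum]
    ring
  have hre : IntegrableOn (fun x => (W x).re) Ω := hWint.re
  have hsplit : (∫ x in Ω, μ x * ∑ k, ‖(χ x : ℂ) * dv k x + (dχ k x : ℂ) * v x‖ ^ 2)
      = (∫ x in Ω, (W x).re) + ∫ x in Ω, μ x * ‖v x‖ ^ 2 * ∑ k, dχ k x ^ 2 := by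
    rw [← integral_add hre hI2]
    exact integral_congr_ae (Filter.Eventually.of_forall fun x => hpt x)
  have hWre : ∫ x in Ω, (W x).re = (∫ x in Ω, W x).re := integral_re hWint
  rw [hWdef] at hWre
  linarith [hsplit, hWre, hb]
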